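/- Let T_y be the first hitting time of y ∈ ℤ for a rate-1 continuous-time simple random walk on ℤ started at the origin. For any t > 0, integer a > 0, and integer x with 3√t ≤ x ≤ 2t, P(T_x < T_{−a} and T_x ≤ t) ≤ (2a/(a+x)) e^{−x²/(12t)}. -/

import Mathlib

open MeasureTheory ProbabilityTheory

/-- Index type for the joint family consisting of the Poisson number of jumps (`none`)
and the i.i.d. steps (`some i`). -/
def JT : Option ℕ → Type
  | none => ℕ
  | some _ => ℤ

instance JTmeas : ∀ o, MeasurableSpace (JT o)
  | none => (inferInstance : MeasurableSpace ℕ)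
  | some _ => (inferInstance : MeasurableSpace ℤ)

/-- The joint family of random variables: the jump count and the steps. -/
def jointFam {Ω : Type*} (N : Ω → ℕ) (ξ : ℕ → Ω → ℤ) : (o : Option ℕ) → Ω → JT o
  | none => N
  | some j => ξ j


namespace Stmt14

def stp (b : Bool) : ℤ := cond b 1 (-1)

def wk (f : ℕ → Bool) (i : ℕ) : ℤ := ∑ k ∈ Finset.range i, stp (f k)

def ext {n : ℕ} (e : Fin n → Bool) : ℕ → Bool :=
  fun k => if h : k < n then e ⟨k, h⟩ else false

def alive (x a : ℕ) {n : ℕ} (e : Fin n → Bool) : Prop :=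
  ∀ i ≤ n, (-(a:ℤ) < wk (ext e) i ∧ wk (ext e) i < x)

def goal (x a : ℕ) {j : ℕ} (e : Fin j → Bool) : Prop :=
  wk (ext e) j = x ∧ ∀ i < j, (-(a:ℤ) < wk (ext e) i ∧ wk (ext e) i < x)

instance decAlive (x a : ℕ) {n : ℕ} (e : Fin n → Bool) : Decidable (alive x a e) := by
  unfold alive; exact inferInstance

instance decGoal (x a : ℕ) {j : ℕ} (e : Fin j → Bool) : Decidable (goal x a e) := by
  unfold goal; exact inferInstance

def cnt (x a j : ℕ) : ℕ := (Finset.univ.filter (fun e : Fin j → Bool => goal x a e)).card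

noncomputable def phi (a : ℕ) (lam : ℝ) (m : ℤ) : ℝ := Real.sinh (lam * ((m:ℝ) + (a:ℝ)))

lemma phi_rec (a : ℕ) (lam : ℝ) (m : ℤ) :
    phi a lam (m+1) + phi a lam (m-1) = 2 * Real.cosh lam * phi a lam m := by
  unfold phi
  push_cast
  have h1 : lam * ((m:ℝ) + 1 + a) = lam * ((m:ℝ) + a) + lam := by ring
  have h2 : lam * ((m:ℝ) - 1 + a) = lam * ((m:ℝ) + a) - lam := by ring
  rw [h1, h2, Real.sinh_add, Real.sinh_sub]
  ring

lemma wk_zero (f : ℕ → Bool) : wk f 0 = 0 := by simp [wk]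

lemma wk_succ (f : ℕ → Bool) (i : ℕ) : wk f (i+1) = wk f i + stp (f i) :=
  Finset.sum_range_succ _ _

lemma wk_congr {f g : ℕ → Bool} {i : ℕ} (h : ∀ k < i, f k = g k) : wk f i = wk g i :=
  Finset.sum_congr rfl (fun k hk => by rw [h k (Finset.mem_range.1 hk)])

lemma ext_snoc_lt {n : ℕ} (e : Fin n → Bool) (b : Bool) {k : ℕ} (h : k < n) :
    ext (Fin.snoc e b) k = ext e k := by
  have h' : k < n + 1 := Nat.lt_succ_of_lt h
  simp only [ext, dif_pos h, dif_pos h']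
  have : (⟨k, h'⟩ : Fin (n+1)) = Fin.castSucc ⟨k, h⟩ := rfl
  rw [this, Fin.snoc_castSucc]

lemma ext_snoc_last {n : ℕ} (e : Fin n → Bool) (b : Bool) :
    ext (Fin.snoc e b) n = b := by
  simp only [ext, dif_pos (Nat.lt_succ_self n)]
  have : (⟨n, Nat.lt_succ_self n⟩ : Fin (n+1)) = Fin.last n := rfl
  rw [this, Fin.snoc_last]

lemma wk_ext_snoc {n : ℕ} (e : Fin n → Bool) (b : Bool) {i : ℕ} (h : i ≤ n) :
    wk (ext (Fin.snoc e b)) i = wk (ext e) i :=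
  wk_congr (fun k hk => ext_snoc_lt e b (lt_of_lt_of_le hk h))

lemma wk_ext_snoc_succ {n : ℕ} (e : Fin n → Bool) (b : Bool) :
    wk (ext (Fin.snoc e b)) (n+1) = wk (ext e) n + stp b := by
  rw [wk_succ, wk_ext_snoc e b (le_refl n), ext_snoc_last]

lemma snoc_bijective (n : ℕ) :
    Function.Bijective (fun p : (Fin n → Bool) × Bool => (Fin.snoc p.1 p.2 : Fin (n+1) → Bool)) := by
  constructor
  · rintro ⟨e1, b1⟩ ⟨e2, b2⟩ h
    simp only at h
    have h1 : e1 = e2 := by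
      funext i
      have := congrFun h (Fin.castSucc i)
      rwa [Fin.snoc_castSucc, Fin.snoc_castSucc] at this
    have h2 : b1 = b2 := by
      have := congrFun h (Fin.last n)
      rwa [Fin.snoc_last, Fin.snoc_last] at this
    exact Prod.ext h1 h2
  · intro f
    exact ⟨⟨Fin.init f, f (Fin.last n)⟩, Fin.snoc_init_self f⟩

lemma parent_step (x a : ℕ) (hx : 0 < x) (ha : 0 < a) (lam : ℝ) (hlam : 0 < lam)
    {n : ℕ} (e : Fin n → Bool) :
    ∑ b : Bool, ((if alive x a (Fin.snoc e b) then phi a lam (wk (ext (Fin.snoc e b)) (n+1)) else 0)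
        + (if goal x a (Fin.snoc e b) then phi a lam x else 0))
      = (if alive x a e then 2 * Real.cosh lam * phi a lam (wk (ext e) n) else 0) := by
  by_cases halive : alive x a e
  · rw [if_pos halive]
    set w := wk (ext e) n with hw
    have hwb := halive n (le_refl n)
    -- each summand equals phi a lam (w + stp b)
    have hterm : ∀ b : Bool,
        (if alive x a (Fin.snoc e b) then phi a lam (wk (ext (Fin.snoc e b)) (n+1)) else 0)
          + (if goal x a (Fin.snoc e b) then phi a lam x else 0)
        = phi a lam (w + stp b) := by
      intro b
      have hwk := wk_ext_snoc_succ e b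
      have hstp : stp b = 1 ∨ stp b = -1 := by cases b <;> simp [stp]
      rcases eq_or_ne (w + stp b) x with hcx | hcx
      · -- child hits x
        have hgoal : goal x a (Fin.snoc e b) := by
          constructor
          · rw [hwk, ← hw, hcx]
          · intro i hi
            rw [wk_ext_snoc e b (Nat.lt_succ_iff.1 hi)]
            exact halive i (Nat.lt_succ_iff.1 hi)
        have hnal : ¬ alive x a (Fin.snoc e b) := by
          intro hal
          have := (hal (n+1) (le_refl _)).2
          rw [hwk, ← hw, hcx] at this
          exact lt_irrefl _ this
        rw [if_neg hnal, if_pos hgoal, hcx]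
        ring
      · rcases eq_or_ne (w + stp b) (-(a:ℤ)) with hca | hca
        · -- child hits -a : both zero, and phi(-a) = 0
          have hnal : ¬ alive x a (Fin.snoc e b) := by
            intro hal
            have := (hal (n+1) (le_refl _)).1
            rw [hwk, ← hw, hca] at this
            exact lt_irrefl _ this
          have hngoal : ¬ goal x a (Fin.snoc e b) := by
            intro hg
            have := hg.1
            rw [hwk, ← hw, hca] at this
            omega
          rw [if_neg hnal, if_neg hngoal, hca]
          unfold phi
          push_cast
          simp [Real.sinh_zero]
        · -- child stays interior
          have hint : -(a:ℤ) < w + stp b ∧ w + stp b < x := by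
            rcases hstp with h1 | h1 <;> omega
          have hal : alive x a (Fin.snoc e b) := by
            intro i hi
            rcases Nat.eq_or_lt_of_le hi with hi' | hi'
            · rw [hi', hwk, ← hw]; exact hint
            · have hin : i ≤ n := Nat.lt_succ_iff.1 hi'
              rw [wk_ext_snoc e b hin]
              exact halive i hin
          have hngoal : ¬ goal x a (Fin.snoc e b) := by
            intro hg
            have := hg.1
            rw [hwk, ← hw] at this
            exact hcx this
          rw [if_pos hal, if_neg hngoal, hwk, ← hw]
          ring
    rw [Finset.sum_congr rfl (fun b _ => hterm b)]
    have : ∑ b : Bool, phi a lam (w + stp b) = phi a lam (w+1) + phi a lam (w-1) := by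
      simp [stp]
      ring_nf
    rw [this, phi_rec]
  · have h1 : ∀ b : Bool, ¬ alive x a (Fin.snoc e b) := by
      intro b hal
      apply halive
      intro i hi
      rw [← wk_ext_snoc e b hi]
      exact hal i (le_trans hi (Nat.le_succ n))
    have h2 : ∀ b : Bool, ¬ goal x a (Fin.snoc e b) := by
      intro b hg
      apply halive
      intro i hi
      rw [← wk_ext_snoc e b hi]
      exact hg.2 i (Nat.lt_succ_of_le hi)
    rw [if_neg halive]
    simp [h1, h2]

lemma invariant (x a : ℕ) (hx : 0 < x) (ha : 0 < a) (lam : ℝ) (hlam : 0 < lam) (n : ℕ) :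
    phi a lam x * ∑ j ∈ Finset.range (n+1), (cnt x a j : ℝ) * (2*Real.cosh lam)^(n-j)
      + ∑ e : Fin n → Bool, (if alive x a e then phi a lam (wk (ext e) n) else 0)
    = (2*Real.cosh lam)^n * phi a lam 0 := by
  induction n with
  | zero =>
    have hcnt0 : cnt x a 0 = 0 := by
      unfold cnt
      rw [Finset.card_eq_zero, Finset.filter_eq_empty_iff]
      intro e _
      unfold goal
      rw [wk_zero]
      intro hcon
      omega
    have halive0 : ∀ e : Fin 0 → Bool, alive x a e := by
      intro e i hi
      interval_cases i
      rw [wk_zero]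
      constructor <;> omega
    simp [hcnt0, halive0, wk_zero]
  | succ n ih =>
    have hsplit : ∑ j ∈ Finset.range (n+1+1), (cnt x a j : ℝ) * (2*Real.cosh lam)^(n+1-j)
        = (2*Real.cosh lam) * ∑ j ∈ Finset.range (n+1), (cnt x a j : ℝ) * (2*Real.cosh lam)^(n-j)
          + (cnt x a (n+1) : ℝ) := by
      rw [Finset.sum_range_succ, Finset.mul_sum]
      simp only [Nat.sub_self, pow_zero, mul_one]
      congr 1
      apply Finset.sum_congr rfl
      intro j hj
      have hj' : j ≤ n := Nat.lt_succ_iff.1 (Finset.mem_range.1 hj)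
      have : n + 1 - j = (n - j) + 1 := by omega
      rw [this, pow_succ]
      ring
    -- sum over level n+1 paths
    have hsnoc : ∀ (F : (Fin (n+1) → Bool) → ℝ),
        ∑ e' : Fin (n+1) → Bool, F e'
          = ∑ e : Fin n → Bool, ∑ b : Bool, F (Fin.snoc e b) := by
      intro F
      have h1 : ∑ p : (Fin n → Bool) × Bool, F (Fin.snoc p.1 p.2) = ∑ e' : Fin (n+1) → Bool, F e' :=
        Fintype.sum_bijective _ (snoc_bijective n) _ _ (fun p => rfl)
      rw [← h1, Fintype.sum_prod_type]
    have hcount : ((cnt x a (n+1) : ℝ)) * phi a lam x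
        = ∑ e' : Fin (n+1) → Bool, (if goal x a e' then phi a lam x else 0) := by
      rw [Finset.sum_ite, Finset.sum_const_zero, add_zero, Finset.sum_const]
      unfold cnt
      simp [mul_comm]
    have key : ∑ e' : Fin (n+1) → Bool, (if alive x a e' then phi a lam (wk (ext e') (n+1)) else 0)
          + ((cnt x a (n+1) : ℝ)) * phi a lam x
        = (2*Real.cosh lam) * ∑ e : Fin n → Bool, (if alive x a e then phi a lam (wk (ext e) n) else 0) := by
      rw [hcount, ← Finset.sum_add_distrib]
      rw [hsnoc (fun e' => (if alive x a e' then phi a lam (wk (ext e') (n+1)) else 0)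
            + (if goal x a e' then phi a lam x else 0))]
      rw [Finset.mul_sum]
      apply Finset.sum_congr rfl
      intro e _
      rw [parent_step x a hx ha lam hlam e]
      split
      · ring
      · simp
    rw [hsplit]
    calc phi a lam x * ((2*Real.cosh lam) * ∑ j ∈ Finset.range (n+1), (cnt x a j : ℝ) * (2*Real.cosh lam)^(n-j)
            + (cnt x a (n+1) : ℝ))
          + ∑ e' : Fin (n+1) → Bool, (if alive x a e' then phi a lam (wk (ext e') (n+1)) else 0)
        = (2*Real.cosh lam) * (phi a lam x * ∑ j ∈ Finset.range (n+1), (cnt x a j : ℝ) * (2*Real.cosh lam)^(n-j))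
          + (∑ e' : Fin (n+1) → Bool, (if alive x a e' then phi a lam (wk (ext e') (n+1)) else 0)
              + ((cnt x a (n+1) : ℝ)) * phi a lam x) := by ring
      _ = (2*Real.cosh lam) * (phi a lam x * ∑ j ∈ Finset.range (n+1), (cnt x a j : ℝ) * (2*Real.cosh lam)^(n-j)
            + ∑ e : Fin n → Bool, (if alive x a e then phi a lam (wk (ext e) n) else 0)) := by
          rw [key]; ring
      _ = (2*Real.cosh lam) * ((2*Real.cosh lam)^n * phi a lam 0) := by rw [ih]
      _ = (2*Real.cosh lam)^(n+1) * phi a lam 0 := by rw [pow_succ]; ring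

lemma comb (x a : ℕ) (hx : 0 < x) (ha : 0 < a) (lam : ℝ) (hlam : 0 < lam) :
    Summable (fun j => (cnt x a j : ℝ) / (2*Real.cosh lam)^j) ∧
    ∑' j, (cnt x a j : ℝ) / (2*Real.cosh lam)^j
      ≤ Real.sinh (lam * a) / Real.sinh (lam * ((x:ℝ) + a)) := by
  have hcosh : (0:ℝ) < Real.cosh lam := Real.cosh_pos lam
  have hr : (0:ℝ) < 2*Real.cosh lam := by linarith
  have hxa : (0:ℝ) < (x:ℝ) + a := by
    have : (0:ℝ) < (x:ℝ) := by exact_mod_cast hx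
    have : (0:ℝ) ≤ (a:ℝ) := Nat.cast_nonneg a
    linarith
  have hphix : 0 < phi a lam x := by
    unfold phi
    apply Real.sinh_pos_iff.2
    push_cast
    positivity
  have hphi0 : phi a lam 0 = Real.sinh (lam * a) := by unfold phi; norm_num
  have hphix' : phi a lam x = Real.sinh (lam * ((x:ℝ) + a)) := by unfold phi; norm_num
  have hphi0nn : 0 ≤ phi a lam 0 := by
    rw [hphi0]
    apply Real.sinh_nonneg_iff.2
    positivity
  set B := Real.sinh (lam * a) / Real.sinh (lam * ((x:ℝ) + a)) with hB
  have hBnn : 0 ≤ B := by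
    rw [hB, ← hphi0, ← hphix']
    positivity
  have hbound : ∀ n, ∑ j ∈ Finset.range (n+1), (cnt x a j : ℝ)/(2*Real.cosh lam)^j ≤ B := by
    intro n
    have hinv := invariant x a hx ha lam hlam n
    have halnn : 0 ≤ ∑ e : Fin n → Bool, (if alive x a e then phi a lam (wk (ext e) n) else 0) := by
      apply Finset.sum_nonneg
      intro e _
      split
      · rename_i hal
        have h1 := (hal n (le_refl n)).1
        unfold phi
        apply Real.sinh_nonneg_iff.2
        apply mul_nonneg hlam.le
        have : (-(a:ℤ) : ℝ) < ((wk (ext e) n : ℤ) : ℝ) := by exact_mod_cast h1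
        push_cast at this ⊢
        linarith
      · exact le_refl 0
    have hkey : phi a lam x * ∑ j ∈ Finset.range (n+1), (cnt x a j : ℝ) * (2*Real.cosh lam)^(n-j)
        ≤ (2*Real.cosh lam)^n * phi a lam 0 := by linarith
    have hterm : ∀ j ∈ Finset.range (n+1), (cnt x a j : ℝ)/(2*Real.cosh lam)^j
        = (cnt x a j : ℝ)*(2*Real.cosh lam)^(n-j)/(2*Real.cosh lam)^n := by
      intro j hj
      have hjn : j ≤ n := Nat.lt_succ_iff.1 (Finset.mem_range.1 hj)
      rw [div_eq_div_iff (pow_pos hr j).ne' (pow_pos hr n).ne']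
      rw [mul_assoc, ← pow_add]
      congr 2
      omega
    rw [Finset.sum_congr rfl hterm, ← Finset.sum_div]
    rw [div_le_iff₀ (pow_pos hr n), hB, ← hphi0, ← hphix']
    rw [div_mul_eq_mul_div, le_div_iff₀ hphix]
    nlinarith
  have hbound' : ∀ n, ∑ j ∈ Finset.range n, (cnt x a j : ℝ)/(2*Real.cosh lam)^j ≤ B := by
    intro n
    cases n with
    | zero => simpa using hBnn
    | succ m => exact hbound m
  have hnn : ∀ j, 0 ≤ (cnt x a j : ℝ)/(2*Real.cosh lam)^j := by
    intro j
    positivity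
  have hsum : Summable (fun j => (cnt x a j : ℝ) / (2*Real.cosh lam)^j) :=
    summable_of_sum_range_le hnn hbound'
  exact ⟨hsum, Summable.tsum_le_of_sum_range_le hsum hbound'⟩

lemma interior_of_first (x a : ℕ) (hx : 0 < x) (ha : 0 < a) (w : ℕ → ℤ) (h0 : w 0 = 0)
    (hstep : ∀ i, w (i+1) = w i + 1 ∨ w (i+1) = w i - 1)
    (j : ℕ) (hne : ∀ i < j, w i ≠ -(a:ℤ) ∧ w i ≠ (x:ℤ)) :
    ∀ i < j, -(a:ℤ) < w i ∧ w i < (x:ℤ) := by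
  intro i
  induction i with
  | zero =>
    intro _
    rw [h0]
    constructor
    · exact_mod_cast neg_neg_of_pos (by exact_mod_cast ha)
    · exact_mod_cast hx
  | succ k ihk =>
    intro hij
    have hk := ihk (lt_trans (Nat.lt_succ_self k) hij)
    have hs := hstep k
    have hnei := hne (k+1) hij
    omega
lemma exp_two_gt : (7.389 : ℝ) < Real.exp 2 := by
  have h := Real.exp_one_gt_d9
  have : Real.exp 2 = Real.exp 1 * Real.exp 1 := by
    rw [← Real.exp_add]; norm_num
  nlinarith [Real.exp_pos 1]

lemma exp_365_ge : (403 : ℝ) ≤ Real.exp (36/5) := by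
  have h2 := exp_two_gt
  have h6 : Real.exp 6 = Real.exp 2 * Real.exp 2 * Real.exp 2 := by
    rw [← Real.exp_add, ← Real.exp_add]; norm_num
  have h65 : Real.exp 6 ≤ Real.exp (36/5) := Real.exp_le_exp.2 (by norm_num)
  nlinarith [Real.exp_pos 2]

/-- numeric core: for `s ≥ 18/5`, `1 + s ≤ (402/403) * exp((347/600) s)`. -/
lemma numCore {s : ℝ} (hs : 18/5 ≤ s) : 1 + s ≤ (402/403) * Real.exp (347/600 * s) := by
  have h1 : Real.exp (347/600 * s) = Real.exp (1041/500) * Real.exp (347/600 * (s - 18/5)) := by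
    rw [← Real.exp_add]; ring_nf
  have h2 : Real.exp (1041/500) = Real.exp 2 * Real.exp (41/500) := by
    rw [← Real.exp_add]; norm_num
  have h3 : (1 + (41:ℝ)/500) ≤ Real.exp (41/500) := by
    have := Real.add_one_le_exp ((41:ℝ)/500); linarith
  have h4 : (1 + 347/600 * (s - 18/5)) ≤ Real.exp (347/600 * (s - 18/5)) := by
    have := Real.add_one_le_exp (347/600 * (s - 18/5)); linarith
  have h5 : (0:ℝ) < 1 + 347/600 * (s - 18/5) := by nlinarith
  have h6 := exp_two_gt
  have h7 : Real.exp (1041/500) ≥ 7.389 * (1 + 41/500) := by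
    rw [h2]; have := Real.exp_pos (41/500); nlinarith
  calc 1 + s ≤ (402/403) * (7.389 * (1 + 41/500) * (1 + 347/600 * (s - 18/5))) := by nlinarith
  _ ≤ (402/403) * Real.exp (347/600 * s) := by
      rw [h1]
      have : Real.exp (1041/500) * (1 + 347/600 * (s - 18/5)) ≤
          Real.exp (1041/500) * Real.exp (347/600 * (s - 18/5)) := by
        have := Real.exp_pos (1041/500); nlinarith
      nlinarith [Real.exp_pos (1041/500)]

/-- core: for `u > 0`, `s ≥ 18/5`, `v = u + s`:
`(1 − e^{−2u}) v ≤ 2 u (1 − e^{−2v}) e^{(347/600) s}`. -/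
lemma core {u s : ℝ} (hu : 0 < u) (hs : 18/5 ≤ s) :
    (1 - Real.exp (-(2*u))) * (u + s) ≤
      2 * u * (1 - Real.exp (-(2*(u+s)))) * Real.exp (347/600 * s) := by
  have hs0 : 0 < s := by linarith
  -- step 1 : (1 - e^{-2u}) (u+s) ≤ 2u(1+s)
  have step1 : (1 - Real.exp (-(2*u))) * (u + s) ≤ 2*u*(1+s) := by
    rcases le_or_gt u (1/2) with h | h
    · have h1 : 1 - Real.exp (-(2*u)) ≤ 2*u := by
        have := Real.add_one_le_exp (-(2*u)); linarith
      have h2 : (0:ℝ) ≤ 1 - Real.exp (-(2*u)) := by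
        have : Real.exp (-(2*u)) ≤ 1 := Real.exp_le_one_iff.2 (by linarith)
        linarith
      nlinarith
    · have h1 : 1 - Real.exp (-(2*u)) ≤ 1 := by
        have := Real.exp_pos (-(2*u)); linarith
      have h2 : (0:ℝ) ≤ 1 - Real.exp (-(2*u)) := by
        have : Real.exp (-(2*u)) ≤ 1 := Real.exp_le_one_iff.2 (by linarith)
        linarith
      nlinarith
  -- step 2 : 1+s ≤ (1 - e^{-2v}) e^{βs}
  have hev : Real.exp (-(2*(u+s))) ≤ 1/403 := by
    have h1 : Real.exp (-(2*(u+s))) ≤ Real.exp (-(36/5)) := Real.exp_le_exp.2 (by linarith)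
    have h2 : Real.exp (-(36/5)) = (Real.exp (36/5))⁻¹ := Real.exp_neg _
    have h3 := exp_365_ge
    rw [h2] at h1
    have h4 : (0:ℝ) < Real.exp (36/5) := Real.exp_pos _
    have : (Real.exp (36/5))⁻¹ ≤ 1/403 := by
      rw [inv_le_comm₀ h4 (by norm_num)] ; linarith
    linarith
  have step2 : 1 + s ≤ (1 - Real.exp (-(2*(u+s)))) * Real.exp (347/600 * s) := by
    have h1 := numCore hs
    have h2 : (402/403 : ℝ) ≤ 1 - Real.exp (-(2*(u+s))) := by linarith
    have h3 := Real.exp_pos (347/600 * s)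
    nlinarith
  have h2u : (0:ℝ) ≤ 1 - Real.exp (-(2*u)) := by
    have : Real.exp (-(2*u)) ≤ 1 := Real.exp_le_one_iff.2 (by linarith)
    linarith
  calc (1 - Real.exp (-(2*u))) * (u + s) ≤ 2*u*(1+s) := step1
  _ ≤ 2 * u * ((1 - Real.exp (-(2*(u+s)))) * Real.exp (347/600 * s)) := by nlinarith
  _ = 2 * u * (1 - Real.exp (-(2*(u+s)))) * Real.exp (347/600 * s) := by ring

lemma cosh_bound {l : ℝ} (h0 : 0 ≤ l) (h1 : l ≤ 4/5) :
    Real.cosh l ≤ 1 + (8/15) * l^2 := by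
  have habs : |l| ≤ 1 := by rw [abs_of_nonneg h0]; linarith
  have habs' : |(-l)| ≤ 1 := by rwa [abs_neg]
  have hb1 := Real.exp_bound habs (n := 4) (by norm_num)
  have hb2 := Real.exp_bound habs' (n := 4) (by norm_num)
  have hs1 : ∑ m ∈ Finset.range 4, l^m / m.factorial = 1 + l + l^2/2 + l^3/6 := by
    norm_num [Finset.sum_range_succ, Nat.factorial]
    try ring
  have hs2 : ∑ m ∈ Finset.range 4, (-l)^m / m.factorial = 1 - l + l^2/2 - l^3/6 := by
    norm_num [Finset.sum_range_succ, Nat.factorial]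
    try ring
  rw [hs1] at hb1; rw [hs2] at hb2
  rw [abs_of_nonneg h0] at hb1
  rw [abs_neg, abs_of_nonneg h0] at hb2
  have e1 : Real.exp l ≤ 1 + l + l^2/2 + l^3/6 + l^4 * (5/96) := by
    have := abs_le.1 hb1
    norm_num [Nat.factorial] at this ⊢
    nlinarith [this.2]
  have e2 : Real.exp (-l) ≤ 1 - l + l^2/2 - l^3/6 + l^4 * (5/96) := by
    have := abs_le.1 hb2
    norm_num [Nat.factorial] at this ⊢
    nlinarith [this.2]
  have hsq : l^2 ≤ 16/25 := by nlinarith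
  rw [Real.cosh_eq]
  nlinarith

lemma partC (t : ℝ) (ht : 0 < t) (a x : ℕ) (ha : 0 < (a:ℝ)) (hx0 : 0 < (x:ℝ))
    (hx1 : 9 * t ≤ (x:ℝ)^2) (hx2 : (x:ℝ) ≤ 2*t) :
    Real.exp (t * (Real.cosh (2*x/(5*t)) - 1)) *
      (Real.sinh (2*x/(5*t) * a) / Real.sinh (2*x/(5*t) * ((a:ℝ)+x)))
    ≤ 2*a/((a:ℝ)+x) * Real.exp (-(x:ℝ)^2 / (12*t)) := by
  set l : ℝ := 2*x/(5*t) with hl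
  have hl0 : 0 < l := by positivity
  have hl1 : l ≤ 4/5 := by
    rw [hl, div_le_iff₀ (by positivity)]; nlinarith
  set s : ℝ := l * x with hsdef
  set u : ℝ := l * a with hudef
  set v : ℝ := l * ((a:ℝ)+x) with hvdef
  have hv : v = u + s := by rw [hvdef, hudef, hsdef]; ring
  have hs : 18/5 ≤ s := by
    rw [hsdef, hl]
    rw [div_mul_eq_mul_div, le_div_iff₀ (by positivity)]
    nlinarith
  have hu : 0 < u := by positivity
  have hv0 : 0 < v := by positivity
  have hsinhu : Real.sinh u = Real.exp u * (1 - Real.exp (-(2*u))) / 2 := by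
    rw [Real.sinh_eq]
    have : Real.exp (-u) = Real.exp u * Real.exp (-(2*u)) := by
      rw [← Real.exp_add]; ring_nf
    rw [this]; ring
  have hsinhv : Real.sinh v = Real.exp v * (1 - Real.exp (-(2*v))) / 2 := by
    rw [Real.sinh_eq]
    have : Real.exp (-v) = Real.exp v * Real.exp (-(2*v)) := by
      rw [← Real.exp_add]; ring_nf
    rw [this]; ring
  have hE1 : Real.exp (t * (Real.cosh l - 1)) ≤ Real.exp (16/75 * s) := by
    apply Real.exp_le_exp.2
    have hc := cosh_bound (le_of_lt hl0) hl1
    have htl : t * l^2 = 2/5 * s := by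
      rw [hsdef, hl]; field_simp
    nlinarith
  -- core inequality
  have key : (1 - Real.exp (-(2*u))) * v ≤
      2 * u * (1 - Real.exp (-(2*v))) * Real.exp (347/600 * s) := by
    rw [hv]; exact core hu hs
  -- assemble
  have hsvpos : 0 < Real.sinh v := Real.sinh_pos_iff.2 hv0
  have hax : 0 < (a:ℝ) + x := by linarith
  have haxv : (a:ℝ) + x = v / l := by rw [hvdef]; field_simp
  have hau : (a:ℝ) = u / l := by rw [hudef]; field_simp
  have hvE : Real.exp v * Real.exp (-(x:ℝ)^2/(12*t)) = Real.exp u * Real.exp (19/24 * s) := by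
    rw [← Real.exp_add, ← Real.exp_add]
    congr 1
    have hxs : (x:ℝ)^2/(12*t) = 5/24 * s := by
      rw [hsdef, hl]; field_simp; ring
    rw [hv, neg_div, hxs]; ring
  have hexps : Real.exp (347/600 * s) * Real.exp (16/75 * s) = Real.exp (19/24 * s) := by
    rw [← Real.exp_add]; congr 1; ring
  -- final chain
  have h1 : (0:ℝ) ≤ 1 - Real.exp (-(2*u)) := by
    have : Real.exp (-(2*u)) ≤ 1 := Real.exp_le_one_iff.2 (by linarith)
    linarith
  have h2 : (0:ℝ) ≤ 1 - Real.exp (-(2*v)) := by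
    have : Real.exp (-(2*v)) ≤ 1 := Real.exp_le_one_iff.2 (by linarith)
    linarith
  have heu := Real.exp_pos u
  have hE1pos := Real.exp_pos (t * (Real.cosh l - 1))
  have hA := Real.exp_pos (16/75 * s)
  have hB := Real.exp_pos (347/600 * s)
  have main2 : Real.exp (t*(Real.cosh l - 1)) * (Real.exp u * (1 - Real.exp (-(2*u)))) * v ≤
      2*u*(Real.exp v * Real.exp (-(x:ℝ)^2/(12*t)))*(1 - Real.exp (-(2*v))) := by
    have step1 : Real.exp (t*(Real.cosh l - 1)) * (Real.exp u * (1 - Real.exp (-(2*u)))) * v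
        ≤ Real.exp (16/75*s) * (Real.exp u * ((1 - Real.exp (-(2*u))) * v)) := by
      have hnn : 0 ≤ Real.exp u * ((1 - Real.exp (-(2*u))) * v) := by
        apply mul_nonneg heu.le (mul_nonneg h1 hv0.le)
      calc Real.exp (t*(Real.cosh l - 1)) * (Real.exp u * (1 - Real.exp (-(2*u)))) * v
          = Real.exp (t*(Real.cosh l - 1)) * (Real.exp u * ((1 - Real.exp (-(2*u))) * v)) := by
            ring
        _ ≤ Real.exp (16/75*s) * (Real.exp u * ((1 - Real.exp (-(2*u))) * v)) :=
            mul_le_mul_of_nonneg_right hE1 hnn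
    have step2 : Real.exp (16/75*s) * (Real.exp u * ((1 - Real.exp (-(2*u))) * v))
        ≤ Real.exp (16/75*s) * (Real.exp u *
            (2 * u * (1 - Real.exp (-(2*v))) * Real.exp (347/600 * s))) := by
      apply mul_le_mul_of_nonneg_left _ hA.le
      exact mul_le_mul_of_nonneg_left key heu.le
    have step3 : Real.exp (16/75*s) * (Real.exp u *
            (2 * u * (1 - Real.exp (-(2*v))) * Real.exp (347/600 * s)))
        = 2*u*(Real.exp v * Real.exp (-(x:ℝ)^2/(12*t)))*(1 - Real.exp (-(2*v))) := by
      rw [hvE, ← hexps]; ring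
    linarith
  have h2l : (0:ℝ) < 2*l := by positivity
  have e1 : Real.exp (t*(Real.cosh l - 1)) * Real.sinh u * ((a:ℝ)+x)
      = (Real.exp (t*(Real.cosh l - 1)) * (Real.exp u * (1 - Real.exp (-(2*u)))) * v)/(2*l) := by
    rw [hsinhu, haxv]; ring
  have e2 : 2*(a:ℝ)*Real.exp (-(x:ℝ)^2/(12*t))*Real.sinh v
      = (2*u*(Real.exp v * Real.exp (-(x:ℝ)^2/(12*t)))*(1 - Real.exp (-(2*v))))/(2*l) := by
    rw [hsinhv, hau]; ring
  have main : Real.exp (t*(Real.cosh l - 1)) * Real.sinh u * ((a:ℝ)+x)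
      ≤ 2*(a:ℝ)*Real.exp (-(x:ℝ)^2/(12*t))*Real.sinh v := by
    rw [e1, e2]; exact (div_le_div_iff_of_pos_right h2l).2 main2
  calc Real.exp (t*(Real.cosh l - 1)) * (Real.sinh u / Real.sinh v)
      = (Real.exp (t*(Real.cosh l - 1)) * Real.sinh u) / Real.sinh v := by ring
    _ ≤ (2*(a:ℝ)*Real.exp (-(x:ℝ)^2/(12*t))) / ((a:ℝ)+x) := by
        rw [div_le_div_iff₀ hsvpos hax]; linarith
    _ = 2*a/((a:ℝ)+x) * Real.exp (-(x:ℝ)^2 / (12*t)) := by ring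

lemma poisson_tail {Ω : Type*} [MeasurableSpace Ω] (μ : Measure Ω)
    (N : Ω → ℕ) (t : ℝ) (ht : 0 < t)
    (hN : ∀ n : ℕ, μ {ω | N ω = n}
        = ENNReal.ofReal (Real.exp (-t) * t ^ n / (n.factorial : ℝ)))
    (r : ℝ) (hr : 1 ≤ r) (j : ℕ) :
    μ {ω | j ≤ N ω} ≤ ENNReal.ofReal (Real.exp (t*(r-1)) * (1/(r:ℝ))^j) := by
  have hr0 : (0:ℝ) < r := lt_of_lt_of_le one_pos hr
  set pois : ℕ → ℝ := fun n => Real.exp (-t) * t ^ n / (n.factorial : ℝ) with hpois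
  set poisr : ℕ → ℝ := fun n => Real.exp (-t) * (t*r) ^ n / (n.factorial : ℝ) with hpoisr
  have hpoisnn : ∀ n, 0 ≤ pois n := fun n => by rw [hpois]; positivity
  have hpoisrnn : ∀ n, 0 ≤ poisr n := fun n => by rw [hpoisr]; positivity
  have hpois_sum : Summable pois := by
    have h := (Real.summable_pow_div_factorial t).mul_left (Real.exp (-t))
    exact h.congr (fun n => by rw [hpois]; ring)
  have hpoisr_sum : Summable poisr := by
    have h := (Real.summable_pow_div_factorial (t*r)).mul_left (Real.exp (-t))
    exact h.congr (fun n => by rw [hpoisr]; ring)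
  have hshift : Summable (fun m => pois (j + m)) :=
    hpois_sum.comp_injective (add_right_injective j)
  have hshiftr : Summable (fun m => poisr (j + m)) :=
    hpoisr_sum.comp_injective (add_right_injective j)
  have hU : {ω | j ≤ N ω} = ⋃ m, {ω | N ω = j + m} := by
    ext ω
    simp only [Set.mem_setOf_eq, Set.mem_iUnion]
    exact ⟨fun h => ⟨N ω - j, by omega⟩, fun ⟨m, hm⟩ => by omega⟩
  rw [hU]
  refine le_trans (measure_iUnion_le _) ?_
  calc ∑' m, μ {ω | N ω = j + m} = ∑' m, ENNReal.ofReal (pois (j+m)) :=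
        tsum_congr (fun m => hN (j+m))
    _ = ENNReal.ofReal (∑' m, pois (j+m)) :=
        (ENNReal.ofReal_tsum_of_nonneg (fun m => hpoisnn _) hshift).symm
    _ ≤ ENNReal.ofReal (Real.exp (t*(r-1)) * (1/(r:ℝ))^j) := by
        apply ENNReal.ofReal_le_ofReal
        have hpt : ∀ m, pois (j+m) ≤ (1/r)^j * poisr (j+m) := by
          intro m
          have h4 : (1/r)^j * (t*r)^(j+m) = t^(j+m) * r^m := by
            rw [mul_pow, pow_add r j m, one_div, inv_pow]
            field_simp
          have h3 : (1:ℝ) ≤ r ^ m := one_le_pow₀ hr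
          have key : t^(j+m) ≤ (1/r)^j * (t*r)^(j+m) := by
            rw [h4]
            exact le_mul_of_one_le_right (pow_nonneg ht.le _) h3
          calc pois (j+m) = Real.exp (-t) * t^(j+m)/((j+m).factorial : ℝ) := rfl
            _ ≤ Real.exp (-t) * ((1/r)^j * (t*r)^(j+m))/((j+m).factorial : ℝ) := by
                gcongr
            _ = (1/r)^j * poisr (j+m) := by rw [hpoisr]; ring
        have hsub : ∑' m, poisr (j+m) ≤ ∑' n, poisr n := by
          apply hshiftr.tsum_le_tsum_of_inj (fun m => j + m) (add_right_injective j)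
            (fun c _ => hpoisrnn c) (fun m => le_refl _) hpoisr_sum
        have hfull : ∑' n, poisr n = Real.exp (-t) * Real.exp (t*r) := by
          have h1 : ∀ n, poisr n = Real.exp (-t) * ((t*r)^n / (n.factorial : ℝ)) := by
            intro n; rw [hpoisr]; ring
          rw [tsum_congr h1, tsum_mul_left]
          congr 1
          rw [Real.exp_eq_exp_ℝ, NormedSpace.exp_eq_tsum_div]
        calc ∑' m, pois (j+m) ≤ ∑' m, (1/r)^j * poisr (j+m) :=
              hshift.tsum_le_tsum hpt (hshiftr.mul_left _)
          _ = (1/r)^j * ∑' m, poisr (j+m) := tsum_mul_left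
          _ ≤ (1/r)^j * (Real.exp (-t) * Real.exp (t*r)) := by
              rw [← hfull]
              exact mul_le_mul_of_nonneg_left hsub (by positivity)
          _ = Real.exp (t*(r-1)) * (1/(r:ℝ))^j := by
              rw [← Real.exp_add]
              ring_nf

lemma cylinder {Ω : Type*} [MeasurableSpace Ω] (μ : Measure Ω)
    (ξ : ℕ → Ω → ℤ) (N : Ω → ℕ)
    (hindep : iIndepFun (jointFam N ξ) μ)
    (hξ1 : ∀ i, μ {ω | ξ i ω = 1} = ENNReal.ofReal (1 / 2))
    (hξ2 : ∀ i, μ {ω | ξ i ω = -1} = ENNReal.ofReal (1 / 2))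
    (j : ℕ) (e : Fin j → Bool) :
    μ ({ω | ∀ i : Fin j, ξ i ω = stp (e i)} ∩ {ω | j ≤ N ω})
      = ENNReal.ofReal ((1:ℝ)/2)^j * μ {ω | j ≤ N ω} := by
  classical
  set S : Finset (Option ℕ) := insert none ((Finset.range j).image some) with hS
  set sets : ∀ o : Option ℕ, Set (JT o) := fun o =>
    Option.rec ((Set.Ici j : Set ℕ) : Set (JT none))
      (fun i => if h : i < j then ({stp (e ⟨i, h⟩)} : Set ℤ) else Set.univ) o
    with hsets
  have hprod : μ (⋂ o ∈ S, (jointFam N ξ o ⁻¹' sets o))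
      = ∏ o ∈ S, μ (jointFam N ξ o ⁻¹' sets o) := by
    apply hindep.meas_biInter
    intro o _
    refine ⟨sets o, ?_, rfl⟩
    cases o with
    | none => exact trivial
    | some i => exact trivial
  have hset : (⋂ o ∈ S, (jointFam N ξ o ⁻¹' sets o))
      = ({ω | ∀ i : Fin j, ξ i ω = stp (e i)} ∩ {ω | j ≤ N ω}) := by
    ext ω
    constructor
    · intro h
      simp only [Set.mem_iInter] at h
      constructor
      · intro i
        have hmem : (some i.val) ∈ S := by
          rw [hS]
          exact Finset.mem_insert_of_mem
            (Finset.mem_image.2 ⟨i.val, Finset.mem_range.2 i.isLt, rfl⟩)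
        have h2 := h (some i.val) hmem
        have h3 : sets (some i.val) = ({stp (e ⟨i.val, i.isLt⟩)} : Set ℤ) := by
          rw [hsets]
          exact dif_pos i.isLt
        rw [h3] at h2
        have h4 : (⟨i.val, i.isLt⟩ : Fin j) = i := rfl
        rw [h4] at h2
        exact h2
      · exact h none (by rw [hS]; exact Finset.mem_insert_self _ _)
    · rintro ⟨h1, h2⟩
      simp only [Set.mem_iInter]
      intro o hmem
      rw [hS] at hmem
      rcases Finset.mem_insert.1 hmem with rfl | hmem'
      · exact h2
      · rcases Finset.mem_image.1 hmem' with ⟨i, hi, rfl⟩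
        have hij := Finset.mem_range.1 hi
        have h3 : sets (some i) = ({stp (e ⟨i, hij⟩)} : Set ℤ) := by
          rw [hsets]
          exact dif_pos hij
        rw [Set.mem_preimage, h3]
        exact h1 ⟨i, hij⟩
  have hnone : none ∉ (Finset.range j).image some := by simp
  have hfac : ∀ i ∈ Finset.range j,
      μ (jointFam N ξ (some i) ⁻¹' sets (some i)) = ENNReal.ofReal ((1:ℝ)/2) := by
    intro i hi
    have hij := Finset.mem_range.1 hi
    have h3 : sets (some i) = ({stp (e ⟨i, hij⟩)} : Set ℤ) := by
      rw [hsets]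
      exact dif_pos hij
    rw [h3]
    have h4 : jointFam N ξ (some i) ⁻¹' ({stp (e ⟨i, hij⟩)} : Set ℤ)
        = {ω | ξ i ω = stp (e ⟨i, hij⟩)} := rfl
    rw [h4]
    cases hb : e ⟨i, hij⟩ with
    | false =>
      have : stp false = (-1 : ℤ) := rfl
      rw [this]
      exact hξ2 i
    | true =>
      have : stp true = (1 : ℤ) := rfl
      rw [this]
      exact hξ1 i
  rw [← hset, hprod, hS, Finset.prod_insert hnone,
    Finset.prod_image (fun a _ b _ h => Option.some_injective _ h)]
  rw [Finset.prod_congr rfl hfac, Finset.prod_const, Finset.card_range]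
  have h5 : jointFam N ξ none ⁻¹' sets none = {ω | j ≤ N ω} := rfl
  rw [h5, mul_comm]

end Stmt14

/-- Let `T_y` be the first hitting time of `y` for a rate-1
continuous-time simple random walk on ℤ started at the origin, realized by i.i.d. fair
`±1` steps `ξ` and a Poisson(`t`) number `N` of jumps by time `t`.  The event
`{T_x < T_{−a}, T_x ≤ t}` is exactly that the walk skeleton reaches `x` within `N` steps
without previously visiting `−a`.  For `t > 0`, integer `a > 0` and integer `x` with
`3√t ≤ x ≤ 2t`, its probability is at most `(2a/(a+x)) e^{−x²/(12t)}`. -/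
theorem stmt14 {Ω : Type*} [MeasurableSpace Ω] (μ : Measure Ω) [IsProbabilityMeasure μ]
    (t : ℝ) (ht : 0 < t) (a x : ℕ) (ha : 0 < a)
    (hx1 : 3 * Real.sqrt t ≤ (x : ℝ)) (hx2 : (x : ℝ) ≤ 2 * t)
    (ξ : ℕ → Ω → ℤ) (N : Ω → ℕ)
    (hmξ : ∀ i, Measurable (ξ i)) (hmN : Measurable N)
    (hindep : iIndepFun (jointFam N ξ) μ)
    (hξ1 : ∀ i, μ {ω | ξ i ω = 1} = ENNReal.ofReal (1 / 2))
    (hξ2 : ∀ i, μ {ω | ξ i ω = -1} = ENNReal.ofReal (1 / 2))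
    (hN : ∀ n : ℕ, μ {ω | N ω = n}
        = ENNReal.ofReal (Real.exp (-t) * t ^ n / (n.factorial : ℝ))) :
    μ {ω | ∃ j ≤ N ω, (∑ i ∈ Finset.range j, ξ i ω) = (x : ℤ)
            ∧ ∀ i < j, (∑ i' ∈ Finset.range i, ξ i' ω) ≠ -(a : ℤ)}
      ≤ ENNReal.ofReal (2 * a / (a + x) * Real.exp (-(x : ℝ) ^ 2 / (12 * t))) := by
  classical
  have hsq : Real.sqrt t ^ 2 = t := Real.sq_sqrt ht.le
  have hsqrtpos : 0 < Real.sqrt t := Real.sqrt_pos.2 ht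
  have hx0R : (0:ℝ) < x := lt_of_lt_of_le (by linarith) hx1
  have hxpos : 0 < x := by exact_mod_cast hx0R
  have haR : (0:ℝ) < a := by exact_mod_cast ha
  have hx9 : 9 * t ≤ (x:ℝ)^2 := by nlinarith
  set lam : ℝ := 2*x/(5*t) with hlam
  have hlam0 : 0 < lam := by rw [hlam]; positivity
  have hr1 : (1:ℝ) ≤ Real.cosh lam := Real.one_le_cosh lam
  have hrc : (0:ℝ) < Real.cosh lam := Real.cosh_pos lam
  set K : ℝ := Real.exp (t * (Real.cosh lam - 1)) with hK
  have hK0 : 0 ≤ K := (Real.exp_pos _).le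
  set B : ℝ := Real.sinh (lam * a) / Real.sinh (lam * ((x:ℝ) + a)) with hB
  obtain ⟨hsumm, htsum⟩ := Stmt14.comb x a hxpos ha lam hlam0
  have hm1 : ∀ i, MeasurableSet {ω | ξ i ω = 1} := fun i => hmξ i (measurableSet_singleton 1)
  have hm2 : ∀ i, MeasurableSet {ω | ξ i ω = -1} := fun i => hmξ i (measurableSet_singleton (-1))
  set Ω' : Set Ω := ⋂ i, ({ω | ξ i ω = 1} ∪ {ω | ξ i ω = -1}) with hΩ'
  have hΩ'c : μ Ω'ᶜ = 0 := by
    rw [hΩ', Set.compl_iInter]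
    refine measure_iUnion_null (fun i => ?_)
    have hd : Disjoint {ω | ξ i ω = 1} {ω | ξ i ω = -1} := by
      rw [Set.disjoint_left]
      rintro ω h1 h2
      simp only [Set.mem_setOf_eq] at h1 h2
      omega
    have hu : μ ({ω | ξ i ω = 1} ∪ {ω | ξ i ω = -1}) = 1 := by
      rw [measure_union hd (hm2 i), hξ1 i, hξ2 i,
        ← ENNReal.ofReal_add (by norm_num) (by norm_num)]
      norm_num
    rw [measure_compl ((hm1 i).union (hm2 i)) (measure_ne_top μ _), hu, measure_univ, tsub_self]
  set bv : Ω → ℕ → Bool := fun ω i => decide (ξ i ω = 1) with hbv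
  have hstp : ∀ ω ∈ Ω', ∀ i, Stmt14.stp (bv ω i) = ξ i ω := by
    intro ω hω i
    have hmem := Set.mem_iInter.1 hω i
    by_cases h : ξ i ω = 1
    · simp [hbv, Stmt14.stp, h]
    · rcases hmem with h1 | h2
      · exact absurd h1 h
      · simp only [Set.mem_setOf_eq] at h2
        simp [hbv, Stmt14.stp, h, h2]
  set A : Set Ω := {ω | ∃ j ≤ N ω, (∑ i ∈ Finset.range j, ξ i ω) = (x : ℤ)
            ∧ ∀ i < j, (∑ i' ∈ Finset.range i, ξ i' ω) ≠ -(a : ℤ)} with hA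
  have hincl : A ∩ Ω' ⊆ ⋃ (j : ℕ),
      ⋃ e ∈ Finset.univ.filter (fun e : Fin j → Bool => Stmt14.goal x a e),
      ({ω | ∀ i : Fin j, ξ i ω = Stmt14.stp (e i)} ∩ {ω | j ≤ N ω}) := by
    rintro ω ⟨hωA, hωΩ⟩
    have hwkξ : ∀ i, Stmt14.wk (bv ω) i = ∑ k ∈ Finset.range i, ξ k ω :=
      fun i => Finset.sum_congr rfl (fun k _ => hstp ω hωΩ k)
    obtain ⟨j, hjN, hjx, hjav⟩ := hωA
    have hex : ∃ j', (Stmt14.wk (bv ω) j' = (x:ℤ) ∧ ∀ i < j', Stmt14.wk (bv ω) i ≠ -(a:ℤ)) :=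
      ⟨j, by rw [hwkξ]; exact hjx, fun i hi => by rw [hwkξ]; exact hjav i hi⟩
    set j₀ := Nat.find hex with hj₀
    obtain ⟨hj₀x, hj₀av⟩ := Nat.find_spec hex
    have hj₀le : j₀ ≤ j := Nat.find_min' hex
      ⟨by rw [hwkξ]; exact hjx, fun i hi => by rw [hwkξ]; exact hjav i hi⟩
    have hnex : ∀ i < j₀, Stmt14.wk (bv ω) i ≠ (x:ℤ) := by
      intro i hi hxeq
      exact Nat.find_min hex hi ⟨hxeq, fun i' hi' => hj₀av i' (lt_trans hi' hi)⟩
    have hsteps : ∀ i, Stmt14.wk (bv ω) (i+1) = Stmt14.wk (bv ω) i + 1 ∨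
        Stmt14.wk (bv ω) (i+1) = Stmt14.wk (bv ω) i - 1 := by
      intro i
      rw [Stmt14.wk_succ]
      cases bv ω i
      · right
        have hst : Stmt14.stp false = -1 := rfl
        rw [hst]
        omega
      · left
        have hst : Stmt14.stp true = 1 := rfl
        rw [hst]
    have hint := Stmt14.interior_of_first x a hxpos ha (Stmt14.wk (bv ω)) (Stmt14.wk_zero _)
      hsteps j₀ (fun i hi => ⟨hj₀av i hi, hnex i hi⟩)
    set e : Fin j₀ → Bool := fun k => bv ω k with he
    have hwke : ∀ i ≤ j₀, Stmt14.wk (Stmt14.ext e) i = Stmt14.wk (bv ω) i := by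
      intro i hi
      apply Stmt14.wk_congr
      intro k hk
      have hkj : k < j₀ := lt_of_lt_of_le hk hi
      simp [Stmt14.ext, dif_pos hkj, he]
    refine Set.mem_iUnion.2 ⟨j₀, Set.mem_iUnion₂.2 ⟨e, ?_, ?_, ?_⟩⟩
    · rw [Finset.mem_filter]
      refine ⟨Finset.mem_univ _, ?_, ?_⟩
      · rw [hwke j₀ (le_refl _)]; exact hj₀x
      · intro i hi
        rw [hwke i (le_of_lt hi)]
        exact hint i hi
    · intro i
      show ξ i ω = Stmt14.stp (e i)
      rw [he]
      exact (hstp ω hωΩ i).symm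
    · exact le_trans hj₀le hjN
  have hmain : μ A ≤ ENNReal.ofReal (K * B) := by
    have h0 : μ (A \ Ω') = 0 := measure_mono_null (fun ω hω => hω.2) hΩ'c
    have h1 : μ A ≤ μ (A ∩ Ω') := by
      calc μ A = μ ((A ∩ Ω') ∪ (A \ Ω')) := by rw [Set.inter_union_diff]
        _ ≤ μ (A ∩ Ω') + μ (A \ Ω') := measure_union_le _ _
        _ = μ (A ∩ Ω') := by rw [h0, add_zero]
    calc μ A ≤ μ (A ∩ Ω') := h1
      _ ≤ μ (⋃ (j : ℕ), ⋃ e ∈ Finset.univ.filter (fun e : Fin j → Bool => Stmt14.goal x a e),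
            ({ω | ∀ i : Fin j, ξ i ω = Stmt14.stp (e i)} ∩ {ω | j ≤ N ω})) :=
          measure_mono hincl
      _ ≤ ∑' (j : ℕ), μ (⋃ e ∈ Finset.univ.filter (fun e : Fin j → Bool => Stmt14.goal x a e),
            ({ω | ∀ i : Fin j, ξ i ω = Stmt14.stp (e i)} ∩ {ω | j ≤ N ω})) :=
          measure_iUnion_le _
      _ ≤ ∑' (j : ℕ), ∑ e ∈ Finset.univ.filter (fun e : Fin j → Bool => Stmt14.goal x a e),
            μ ({ω | ∀ i : Fin j, ξ i ω = Stmt14.stp (e i)} ∩ {ω | j ≤ N ω}) :=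
          ENNReal.tsum_le_tsum (fun j => measure_biUnion_finset_le _ _)
      _ = ∑' (j : ℕ), (Stmt14.cnt x a j : ENNReal) *
            (ENNReal.ofReal ((1:ℝ)/2)^j * μ {ω | j ≤ N ω}) := by
          refine tsum_congr (fun j => ?_)
          rw [Finset.sum_congr rfl
            (fun e _ => Stmt14.cylinder μ ξ N hindep hξ1 hξ2 j e)]
          rw [Finset.sum_const]
          rw [nsmul_eq_mul]
          rfl
      _ ≤ ∑' (j : ℕ), (Stmt14.cnt x a j : ENNReal) *
            (ENNReal.ofReal ((1:ℝ)/2)^j * ENNReal.ofReal (K * (1/Real.cosh lam)^j)) := by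
          refine ENNReal.tsum_le_tsum (fun j => ?_)
          gcongr
          rw [hK]
          exact Stmt14.poisson_tail μ N t ht hN (Real.cosh lam) hr1 j
      _ = ∑' (j : ℕ), ENNReal.ofReal (K * ((Stmt14.cnt x a j : ℝ) / (2*Real.cosh lam)^j)) := by
          refine tsum_congr (fun j => ?_)
          rw [← ENNReal.ofReal_pow (by norm_num : (0:ℝ) ≤ 1/2),
              ← ENNReal.ofReal_mul (by positivity),
              ← ENNReal.ofReal_natCast (Stmt14.cnt x a j),
              ← ENNReal.ofReal_mul (by positivity)]
          congr 1
          have hp : ((1:ℝ)/2)^j * (1/Real.cosh lam)^j = 1/(2*Real.cosh lam)^j := by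
            rw [← mul_pow]
            congr 1
            field_simp
            rw [← mul_pow, one_div_mul_cancel (by positivity), one_pow]
          calc (Stmt14.cnt x a j : ℝ) * (((1:ℝ)/2)^j * (K * (1/Real.cosh lam)^j))
              = K * ((Stmt14.cnt x a j : ℝ) * (((1:ℝ)/2)^j * (1/Real.cosh lam)^j)) := by ring
            _ = K * ((Stmt14.cnt x a j : ℝ) / (2*Real.cosh lam)^j) := by
                rw [hp]; ring
      _ = ENNReal.ofReal (∑' (j : ℕ), K * ((Stmt14.cnt x a j : ℝ) / (2*Real.cosh lam)^j)) :=
          (ENNReal.ofReal_tsum_of_nonneg (fun j => by positivity) (hsumm.mul_left K)).symm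
      _ ≤ ENNReal.ofReal (K * B) := by
          apply ENNReal.ofReal_le_ofReal
          rw [tsum_mul_left, hB]
          exact mul_le_mul_of_nonneg_left htsum hK0
  refine le_trans hmain (ENNReal.ofReal_le_ofReal ?_)
  have hpc := Stmt14.partC t ht a x haR hx0R hx9 hx2
  rw [hK, hB, hlam]
  have hcomm : (x:ℝ) + a = (a:ℝ) + x := add_comm _ _
  rw [hcomm]
  exact hpc
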